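/- arXiv:2110.02620 — 2 statements merged into one kernel-verified Lean document; each statement's English description precedes it below -/
import Mathlib

section
/- Let n ≥ 2, m ∈ {1,...,n}, α < 0 with α > 2 - 2n/m, and p > 0. Then ∫_{B(0,1)} (|z|^α - 1)^p |z|^{(α-2)m} dV_{2n}(z) < ∞ if and only if p < (-2n + (2-α)m)/α. -/
open Set Function Metric MeasureTheory Measure Real
open scoped ENNReal


lemma lintegral_fun_norm_addHaar' {E : Type*} [NormedAddCommGroup E] [NormedSpace ℝ E]
    [MeasurableSpace E] [BorelSpace E] [Nontrivial E] [FiniteDimensional ℝ E]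
    (μ : Measure E) [μ.IsAddHaarMeasure] (g : ℝ → ℝ≥0∞) (hg : Measurable g) :
    ∫⁻ x, g ‖x‖ ∂μ = μ.toSphere univ *
      ∫⁻ r in Ioi (0 : ℝ), ENNReal.ofReal (r ^ (Module.finrank ℝ E - 1)) * g r := by
  have hmeas : Measurable (g ∘ Subtype.val ∘ (Prod.snd : sphere (0:E) 1 × Ioi (0:ℝ) → Ioi (0:ℝ))) :=
    hg.comp (measurable_subtype_coe.comp measurable_snd)
  calc
    ∫⁻ x, g ‖x‖ ∂μ = ∫⁻ x : ({(0)}ᶜ : Set E), g ‖(x : E)‖ ∂(μ.comap (↑)) := by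
      rw [lintegral_subtype_comap (measurableSet_singleton (0:E)).compl (fun x ↦ g ‖x‖),
        MeasureTheory.restrict_compl_singleton]
    _ = ∫⁻ y : sphere (0 : E) 1 × Ioi (0 : ℝ), g y.2
        ∂(μ.toSphere.prod (Measure.volumeIoiPow (Module.finrank ℝ E - 1))) := by
      simpa [Function.comp_def] using
        μ.measurePreserving_homeomorphUnitSphereProd.lintegral_comp
          (f := g ∘ Subtype.val ∘ Prod.snd) hmeas
    _ = μ.toSphere univ * ∫⁻ y : Ioi (0 : ℝ), g y ∂(Measure.volumeIoiPow (Module.finrank ℝ E - 1)) := by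
      rw [MeasureTheory.lintegral_prod
        (fun y : sphere (0:E) 1 × Ioi (0:ℝ) => g (y.2 : ℝ)) hmeas.aemeasurable]
      simp [lintegral_const, mul_comm]
    _ = _ := by
      congr 1
      rw [Measure.volumeIoiPow,
        lintegral_withDensity_eq_lintegral_mul (g := fun y : Ioi (0:ℝ) => g ↑y) _
          (by fun_prop) (hg.comp measurable_subtype_coe)]
      simp only [Pi.mul_apply]
      exact lintegral_subtype_comap measurableSet_Ioi
        (fun r => ENNReal.ofReal (r ^ (Module.finrank ℝ E - 1)) * g r)


lemma aux1D (α p β t : ℝ) (hα : α < 0) (hp : 0 < p) :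
    (∫⁻ r in Ioo (0:ℝ) 1, ENNReal.ofReal ((r ^ α - 1) ^ p * r ^ β * r ^ t)) < ⊤ ↔
      -1 < α * p + β + t := by
  set s : ℝ := α * p + β + t with hs
  have hrs : ∀ r : ℝ, 0 < r → r ^ (α * p) * r ^ β * r ^ t = r ^ s := by
    intro r hr
    rw [hs, Real.rpow_add hr, Real.rpow_add hr]
  have hmeas : Measurable fun r : ℝ => r ^ s := by fun_prop
  constructor
  · intro hfin
    set κ : ℝ := 1 - (2:ℝ) ^ α with hκ
    have h2α : (0:ℝ) < (2:ℝ) ^ α := Real.rpow_pos_of_pos two_pos α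
    have h2α1 : (2:ℝ) ^ α < 1 := Real.rpow_lt_one_of_one_lt_of_neg one_lt_two hα
    have hκ0 : 0 < κ := by simp only [hκ, sub_pos]; exact h2α1
    have hbound : ∀ r ∈ Ioo (0:ℝ) (1/2),
        κ ^ p * r ^ s ≤ (r ^ α - 1) ^ p * r ^ β * r ^ t := by
      intro r hr
      have hr0 : 0 < r := hr.1
      have hrα : (1/2:ℝ) ^ α ≤ r ^ α :=
        Real.rpow_le_rpow_of_nonpos hr0 hr.2.le hα.le
      have h12 : ((1:ℝ)/2) ^ α = ((2:ℝ) ^ α)⁻¹ := by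
        rw [one_div, Real.inv_rpow two_pos.le]
      have hlow : κ * r ^ α ≤ r ^ α - 1 := by
        have h1 : (1:ℝ) ≤ (2:ℝ) ^ α * r ^ α := by
          calc (1:ℝ) = (2:ℝ) ^ α * ((2:ℝ) ^ α)⁻¹ := by field_simp
            _ ≤ (2:ℝ) ^ α * r ^ α := by
                rw [← h12]; exact mul_le_mul_of_nonneg_left hrα h2α.le
        have : κ * r ^ α = r ^ α - (2:ℝ) ^ α * r ^ α := by ring
        linarith
      have hκr : 0 ≤ κ * r ^ α := by positivity
      have h2 : (κ * r ^ α) ^ p ≤ (r ^ α - 1) ^ p :=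
        Real.rpow_le_rpow hκr hlow hp.le
      have h3 : (κ * r ^ α) ^ p = κ ^ p * r ^ (α * p) := by
        rw [Real.mul_rpow hκ0.le (Real.rpow_nonneg hr0.le α), ← Real.rpow_mul hr0.le]
      have hβt : 0 ≤ r ^ β * r ^ t := by positivity
      calc κ ^ p * r ^ s = κ ^ p * r ^ (α * p) * (r ^ β * r ^ t) := by
            rw [← hrs r hr0]; ring
        _ = (κ * r ^ α) ^ p * (r ^ β * r ^ t) := by rw [h3]
        _ ≤ (r ^ α - 1) ^ p * (r ^ β * r ^ t) := mul_le_mul_of_nonneg_right h2 hβt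
        _ = (r ^ α - 1) ^ p * r ^ β * r ^ t := by ring
    have hfin2 : (∫⁻ r in Ioo (0:ℝ) (1/2), ENNReal.ofReal (κ ^ p * r ^ s)) < ⊤ := by
      refine lt_of_le_of_lt ?_ hfin
      refine le_trans (lintegral_mono_ae ?_) (lintegral_mono_set (Ioo_subset_Ioo le_rfl (by norm_num)))
      filter_upwards [ae_restrict_mem measurableSet_Ioo] with r hr
      exact ENNReal.ofReal_le_ofReal (hbound r hr)
    have hconst : ENNReal.ofReal (κ ^ p) ≠ 0 := by
      simp [ENNReal.ofReal_eq_zero, not_le]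
      positivity
    have hfin3 : (∫⁻ r in Ioo (0:ℝ) (1/2), ENNReal.ofReal (r ^ s)) < ⊤ := by
      by_contra h
      rw [not_lt, top_le_iff] at h
      have : (∫⁻ r in Ioo (0:ℝ) (1/2), ENNReal.ofReal (κ ^ p * r ^ s)) = ⊤ := by
        calc (∫⁻ r in Ioo (0:ℝ) (1/2), ENNReal.ofReal (κ ^ p * r ^ s))
            = ∫⁻ r in Ioo (0:ℝ) (1/2), ENNReal.ofReal (κ ^ p) * ENNReal.ofReal (r ^ s) := by
              simp_rw [ENNReal.ofReal_mul (by positivity : (0:ℝ) ≤ κ ^ p)]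
          _ = ENNReal.ofReal (κ ^ p) * ∫⁻ r in Ioo (0:ℝ) (1/2), ENNReal.ofReal (r ^ s) :=
              lintegral_const_mul' _ _ ENNReal.ofReal_ne_top
          _ = ⊤ := by rw [h, ENNReal.mul_top hconst]
      exact absurd (this ▸ hfin2) (lt_irrefl ⊤)
    have hInt : IntegrableOn (fun r : ℝ => r ^ s) (Ioo (0:ℝ) (1/2)) := by
      refine ⟨hmeas.aestronglyMeasurable, ?_⟩
      rw [hasFiniteIntegral_iff_ofReal ?_]
      · exact hfin3
      · filter_upwards [ae_restrict_mem measurableSet_Ioo] with r hr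
        exact Real.rpow_nonneg hr.1.le s
    exact (intervalIntegral.integrableOn_Ioo_rpow_iff (by norm_num : (0:ℝ) < 1/2)).mp hInt
  · intro hcond
    have hInt : IntegrableOn (fun r : ℝ => r ^ s) (Ioo (0:ℝ) 1) :=
      (intervalIntegral.integrableOn_Ioo_rpow_iff one_pos).mpr hcond
    have hfin : (∫⁻ r in Ioo (0:ℝ) 1, ENNReal.ofReal (r ^ s)) < ⊤ :=
      hInt.lintegral_lt_top
    refine lt_of_le_of_lt (lintegral_mono_ae ?_) hfin
    filter_upwards [ae_restrict_mem measurableSet_Ioo] with r hr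
    refine ENNReal.ofReal_le_ofReal ?_
    have hr0 : 0 < r := hr.1
    have h1 : (0:ℝ) ≤ r ^ α - 1 := by
      have := Real.one_le_rpow_of_pos_of_le_one_of_nonpos hr0 hr.2.le hα.le
      linarith
    have h2 : (r ^ α - 1) ^ p ≤ (r ^ α) ^ p :=
      Real.rpow_le_rpow h1 (by linarith) hp.le
    have h3 : (r ^ α) ^ p = r ^ (α * p) := by rw [← Real.rpow_mul hr0.le]
    have hβt : 0 ≤ r ^ β * r ^ t := by positivity
    calc (r ^ α - 1) ^ p * r ^ β * r ^ t
        = (r ^ α - 1) ^ p * (r ^ β * r ^ t) := by ring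
      _ ≤ r ^ (α * p) * (r ^ β * r ^ t) := by
          rw [← h3]; exact mul_le_mul_of_nonneg_right h2 hβt
      _ = r ^ s := by rw [← hrs r hr0]; ring


section Main

theorem stmt_9 (n m : ℕ) (hn : 2 ≤ n) (hm1 : 1 ≤ m) (hmn : m ≤ n)
    (α p : ℝ) (hα0 : α < 0) (hα1 : 2 - 2 * n / m < α) (hp : 0 < p) :
    (∫⁻ z in Metric.ball (0 : EuclideanSpace ℝ (Fin (2 * n))) 1,
        ENNReal.ofReal ((‖z‖ ^ α - 1) ^ p * ‖z‖ ^ ((α - 2) * m)) ∂MeasureTheory.volume < ⊤)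
      ↔ p < (-2 * n + (2 - α) * m) / α := by
  set E := EuclideanSpace ℝ (Fin (2 * n)) with hE
  haveI : Nonempty (Fin (2 * n)) := ⟨⟨0, by omega⟩⟩
  have hd : Module.finrank ℝ E = 2 * n := finrank_euclideanSpace_fin
  haveI : Nontrivial E := Module.nontrivial_of_finrank_pos (R := ℝ) (by omega : 0 < Module.finrank ℝ E)
  have hαne : α ≠ 0 := hα0.ne
  have hβne : (α - 2) * (m:ℝ) ≠ 0 := by
    have : (0:ℝ) < m := by exact_mod_cast hm1
    nlinarith
  set φ : ℝ → ℝ≥0∞ := fun r => ENNReal.ofReal ((r ^ α - 1) ^ p * r ^ ((α - 2) * m)) with hφ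
  have hφmeas : Measurable φ := by fun_prop
  set g : ℝ → ℝ≥0∞ := (Ioo (0:ℝ) 1).indicator φ with hg
  have hgmeas : Measurable g := hφmeas.indicator measurableSet_Ioo
  have step1 : (∫⁻ z in Metric.ball (0 : E) 1,
      ENNReal.ofReal ((‖z‖ ^ α - 1) ^ p * ‖z‖ ^ ((α - 2) * m)) ∂volume)
      = ∫⁻ z : E, g ‖z‖ ∂volume := by
    rw [← lintegral_indicator measurableSet_ball]
    refine lintegral_congr fun z => ?_
    by_cases h0 : z = 0
    · subst h0
      rw [indicator_of_mem (mem_ball_self one_pos), hg, indicator_of_notMem (by simp)]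
      simp [Real.zero_rpow hβne]
    · have hz : 0 < ‖z‖ := norm_pos_iff.mpr h0
      by_cases h1 : ‖z‖ < 1
      · rw [indicator_of_mem (mem_ball_zero_iff.mpr h1), hg,
          indicator_of_mem (mem_Ioo.mpr ⟨hz, h1⟩)]
      · rw [indicator_of_notMem (fun hmem => h1 (mem_ball_zero_iff.mp hmem)), hg,
          indicator_of_notMem (fun hmem => h1 hmem.2)]
  set D : ℕ := Module.finrank ℝ E - 1 with hD
  have step2 : (∫⁻ z : E, g ‖z‖ ∂volume) = (volume : Measure E).toSphere univ *
      ∫⁻ r in Ioi (0:ℝ), ENNReal.ofReal (r ^ D) * g r :=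
    lintegral_fun_norm_addHaar' (volume : Measure E) g hgmeas
  have step3 : (∫⁻ r in Ioi (0:ℝ), ENNReal.ofReal (r ^ D) * g r)
      = ∫⁻ r in Ioo (0:ℝ) 1,
          ENNReal.ofReal ((r ^ α - 1) ^ p * r ^ ((α - 2) * m) * r ^ (D:ℝ)) := by
    have hpt : ∀ r : ℝ, ENNReal.ofReal (r ^ D) * g r
        = (Ioo (0:ℝ) 1).indicator
            (fun r => ENNReal.ofReal ((r ^ α - 1) ^ p * r ^ ((α - 2) * m) * r ^ (D:ℝ))) r := by
      intro r
      by_cases hr : r ∈ Ioo (0:ℝ) 1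
      · rw [hg, indicator_of_mem hr, indicator_of_mem hr,
          ← ENNReal.ofReal_mul (pow_nonneg hr.1.le D)]
        congr 1
        rw [← Real.rpow_natCast r D]
        ring
      · rw [hg, indicator_of_notMem hr, indicator_of_notMem hr, mul_zero]
    rw [lintegral_congr hpt, lintegral_indicator measurableSet_Ioo,
      Measure.restrict_restrict measurableSet_Ioo,
      inter_eq_left.mpr Ioo_subset_Ioi_self]
  have hsphere_ne : (volume : Measure E).toSphere univ ≠ 0 := by
    rw [Measure.toSphere_apply_univ]
    refine mul_ne_zero ?_ ?_
    · simp [hd]; omega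
    · exact (measure_ball_pos volume 0 one_pos).ne'
  have hsphere_top : (volume : Measure E).toSphere univ ≠ ⊤ :=
    (measure_lt_top _ _).ne
  rw [step1, step2, step3]
  have hDcast : (D:ℝ) = 2 * n - 1 := by
    rw [hD, hd]
    have : (1:ℕ) ≤ 2 * n := by omega
    push_cast [Nat.cast_sub this]
    ring
  rw [ENNReal.mul_lt_top_iff]
  have hiff := aux1D α p ((α - 2) * m) (D:ℝ) hα0 hp
  constructor
  · rintro (⟨-, hJ⟩ | h0 | h0)
    · have hcond := hiff.mp hJ
      rw [hDcast] at hcond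
      rw [lt_div_iff_of_neg hα0]
      nlinarith
    · exact absurd h0 hsphere_ne
    · -- integral is zero : still gives finiteness, derive condition
      have hJ : (∫⁻ r in Ioo (0:ℝ) 1,
          ENNReal.ofReal ((r ^ α - 1) ^ p * r ^ ((α - 2) * m) * r ^ (D:ℝ))) < ⊤ := by
        rw [h0]; exact ENNReal.zero_lt_top
      have hcond := hiff.mp hJ
      rw [hDcast] at hcond
      rw [lt_div_iff_of_neg hα0]
      nlinarith
  · intro hcond
    left
    refine ⟨hsphere_top.lt_top, ?_⟩
    apply hiff.mpr
    rw [hDcast]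
    rw [lt_div_iff_of_neg hα0] at hcond
    nlinarith

end Main
end

section
/- Let n ≥ 2, m ∈ {1,...,n-1}, and 0 < α < (n-1)/n. Define f_α(z) = |z|^{-2m} (-log|z|)^{αm - m - 1} ((2n-2m)(-log|z|) + m(1-α)) for z in the punctured ball B(0,1/2) ⊂ ℂ^n. Then ∫_{B(0,1/2)} f_α(z)^{n/m} dV_{2n}(z) < ∞. -/
open MeasureTheory Metric Real
open scoped ENNReal
set_option maxHeartbeats 1000000

theorem stmt_11 (n m : ℕ) (hn : 2 ≤ n) (hm1 : 1 ≤ m) (hmn : m ≤ n - 1)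
    (α : ℝ) (hα0 : 0 < α) (hα1 : α < (n - 1 : ℝ) / n) :
    ∫⁻ z in Metric.ball (0 : EuclideanSpace ℝ (Fin (2 * n))) (1 / 2),
        ENNReal.ofReal
          ((‖z‖ ^ (-2 * (m : ℝ)) * (-Real.log ‖z‖) ^ (α * m - m - 1) *
              ((2 * n - 2 * m) * (-Real.log ‖z‖) + m * (1 - α))) ^ ((n : ℝ) / m))
        ∂MeasureTheory.volume < ⊤ := by
  haveI : Nonempty (Fin (2 * n)) := ⟨⟨0, by omega⟩⟩
  have hn0 : (0:ℝ) < n := by positivity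
  have hm0 : (0:ℝ) < m := by exact_mod_cast hm1
  have hmn' : (m:ℝ) ≤ (n:ℝ) - 1 := by
    have := (Nat.cast_le (α := ℝ)).mpr hmn
    rwa [Nat.cast_sub (by omega), Nat.cast_one] at this
  have hα1'' : α < 1 := lt_of_lt_of_le hα1 (by
    rw [div_le_one hn0]; linarith)
  have hp : (α - 1) * n < -1 := by
    have := (lt_div_iff₀ hn0).mp hα1
    nlinarith
  have hlog2 : (0:ℝ) < Real.log 2 := Real.log_pos (by norm_num)
  have hlog2' : Real.log 2 ≤ 1 := by
    have := Real.log_le_sub_one_of_pos (x := 2) (by norm_num)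
    linarith
  have he₁ : α * m - m - 1 ≤ 0 := by nlinarith
  have hq : (0:ℝ) < (n:ℝ) / m := by positivity
  set e₁ : ℝ := α * m - m - 1 with he₁def
  set p : ℝ := (α - 1) * n with hpdef
  -- the annuli
  set S : ℕ → Set (EuclideanSpace ℝ (Fin (2 * n))) :=
    fun k => {z | (2:ℝ) ^ (-(k:ℝ) - 2) ≤ ‖z‖ ∧ ‖z‖ < (2:ℝ) ^ (-(k:ℝ) - 1)} with hSdef
  set F : EuclideanSpace ℝ (Fin (2 * n)) → ℝ≥0∞ := fun z =>
    ENNReal.ofReal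
      ((‖z‖ ^ (-2 * (m : ℝ)) * (-Real.log ‖z‖) ^ (α * m - m - 1) *
          ((2 * n - 2 * m) * (-Real.log ‖z‖) + m * (1 - α))) ^ ((n : ℝ) / m)) with hFdef
  -- constants
  set b : ℕ → ℝ := fun k =>
    ((2:ℝ) ^ (2 * (m:ℝ) * ((k:ℝ) + 2)) * (((k:ℝ) + 1) * Real.log 2) ^ e₁ *
      (3 * (n:ℝ) * ((k:ℝ) + 2))) ^ ((n:ℝ) / m) with hbdef
  -- pointwise bound on the annuli
  have hpoint : ∀ k : ℕ, ∀ z ∈ S k, F z ≤ ENNReal.ofReal (b k) := by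
    intro k z hz
    obtain ⟨h1, h2⟩ := hz
    have hr0 : (0:ℝ) < ‖z‖ := lt_of_lt_of_le (Real.rpow_pos_of_pos (by norm_num) _) h1
    set t : ℝ := -Real.log ‖z‖ with htdef
    have ht1 : ((k:ℝ) + 1) * Real.log 2 < t := by
      have := Real.log_lt_log hr0 h2
      rw [Real.log_rpow (by norm_num)] at this
      simp only [htdef]; nlinarith
    have ht2 : t ≤ ((k:ℝ) + 2) * Real.log 2 := by
      have := Real.log_le_log (Real.rpow_pos_of_pos (by norm_num) _) h1
      rw [Real.log_rpow (by norm_num)] at this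
      simp only [htdef]; nlinarith
    have ht0 : (0:ℝ) < t := lt_of_le_of_lt (by positivity) ht1
    have hk1 : (0:ℝ) < ((k:ℝ) + 1) * Real.log 2 := by positivity
    have hA : ‖z‖ ^ (-2 * (m:ℝ)) ≤ (2:ℝ) ^ (2 * (m:ℝ) * ((k:ℝ) + 2)) := by
      calc ‖z‖ ^ (-2 * (m:ℝ)) ≤ ((2:ℝ) ^ (-(k:ℝ) - 2)) ^ (-2 * (m:ℝ)) :=
            Real.rpow_le_rpow_of_nonpos (Real.rpow_pos_of_pos (by norm_num) _) h1
              (by nlinarith)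
        _ = (2:ℝ) ^ (2 * (m:ℝ) * ((k:ℝ) + 2)) := by
            rw [← Real.rpow_mul (by norm_num)]; ring_nf
    have hB : t ^ e₁ ≤ (((k:ℝ) + 1) * Real.log 2) ^ e₁ :=
      Real.rpow_le_rpow_of_nonpos hk1 ht1.le he₁
    have hC : (2 * (n:ℝ) - 2 * m) * t + m * (1 - α) ≤ 3 * (n:ℝ) * ((k:ℝ) + 2) := by
      have hk0 : (0:ℝ) ≤ (k:ℝ) := Nat.cast_nonneg k
      have h2nm : 2 * (n:ℝ) - 2 * m ≤ 2 * n := by linarith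
      have ht3 : t ≤ (k:ℝ) + 2 := le_trans ht2 (by nlinarith)
      have hstep1 : (2 * (n:ℝ) - 2 * m) * t ≤ 2 * n * ((k:ℝ) + 2) :=
        mul_le_mul h2nm ht3 ht0.le (by linarith)
      have hstep2 : (m:ℝ) * (1 - α) ≤ n * ((k:ℝ) + 2) := by nlinarith
      linarith
    have hClb : (0:ℝ) ≤ (2 * (n:ℝ) - 2 * m) * t + m * (1 - α) :=
      add_nonneg (mul_nonneg (by linarith) ht0.le) (mul_nonneg hm0.le (by linarith))
    have hGnn : (0:ℝ) ≤ ‖z‖ ^ (-2 * (m:ℝ)) * t ^ e₁ *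
        ((2 * (n:ℝ) - 2 * m) * t + m * (1 - α)) :=
      mul_nonneg (mul_nonneg (Real.rpow_nonneg (norm_nonneg z) _)
        (Real.rpow_nonneg ht0.le _)) hClb
    have hG : ‖z‖ ^ (-2 * (m:ℝ)) * t ^ e₁ * ((2 * (n:ℝ) - 2 * m) * t + m * (1 - α)) ≤
        (2:ℝ) ^ (2 * (m:ℝ) * ((k:ℝ) + 2)) * (((k:ℝ) + 1) * Real.log 2) ^ e₁ *
          (3 * (n:ℝ) * ((k:ℝ) + 2)) := by
      apply mul_le_mul _ hC hClb (by positivity)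
      exact mul_le_mul hA hB (Real.rpow_nonneg ht0.le _)
        (Real.rpow_nonneg (by positivity) _)
    apply ENNReal.ofReal_le_ofReal
    exact Real.rpow_le_rpow hGnn hG hq.le
  -- covering
  classical
  have hcover : ball (0 : EuclideanSpace ℝ (Fin (2 * n))) (1 / 2) \ {0} ⊆ ⋃ k, S k := by
    rintro z ⟨hz1, hz2⟩
    rw [mem_ball_zero_iff] at hz1
    have hz0 : (0:ℝ) < ‖z‖ := norm_pos_iff.mpr (by simpa using hz2)
    have hex : ∃ j : ℕ, (2:ℝ) ^ (-(j:ℝ) - 2) ≤ ‖z‖ := by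
      obtain ⟨j, hj⟩ := exists_pow_lt_of_lt_one hz0 (by norm_num : (1:ℝ)/2 < 1)
      refine ⟨j, le_of_lt (lt_of_le_of_lt ?_ hj)⟩
      have h12 : ((1:ℝ)/2) ^ j = (2:ℝ) ^ (-(j:ℝ)) := by
        rw [Real.rpow_neg (by norm_num), Real.rpow_natCast]
        simp [one_div, inv_pow]
      rw [h12]
      exact Real.rpow_le_rpow_of_exponent_le (by norm_num) (by linarith)
    set k := Nat.find hex with hkdef
    have hk1 : (2:ℝ) ^ (-(k:ℝ) - 2) ≤ ‖z‖ := Nat.find_spec hex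
    have hk2 : ‖z‖ < (2:ℝ) ^ (-(k:ℝ) - 1) := by
      rcases Nat.eq_zero_or_pos k with h0 | h0
      · rw [h0]
        have : ((2:ℝ)) ^ (-(0:ℕ):ℝ) / 2 = 1/2 := by norm_num
        calc ‖z‖ < 1/2 := hz1
          _ ≤ (2:ℝ) ^ (-((0:ℕ):ℝ) - 1) := by
              rw [Real.rpow_sub (by norm_num), Real.rpow_one]
              norm_num
      · have hmin := Nat.find_min hex (Nat.sub_lt h0 one_pos)
        push_neg at hmin
        have hcast : ((k - 1 : ℕ) : ℝ) = (k:ℝ) - 1 := by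
          rw [Nat.cast_sub h0]; norm_num
        rw [hcast] at hmin
        calc ‖z‖ < (2:ℝ) ^ (-((k:ℝ) - 1) - 2) := hmin
          _ = (2:ℝ) ^ (-(k:ℝ) - 1) := by ring_nf
    exact Set.mem_iUnion.mpr ⟨k, hk1, hk2⟩
  -- measure of annuli
  have hdim : Module.finrank ℝ (EuclideanSpace ℝ (Fin (2 * n))) = 2 * n :=
    finrank_euclideanSpace_fin
  have hμS : ∀ k : ℕ, volume (S k) ≤
      ENNReal.ofReal (((2:ℝ) ^ (-(k:ℝ) - 1)) ^ (2 * n)) *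
        volume (ball (0 : EuclideanSpace ℝ (Fin (2 * n))) 1) := by
    intro k
    calc volume (S k) ≤ volume (ball (0 : EuclideanSpace ℝ (Fin (2 * n)))
          ((2:ℝ) ^ (-(k:ℝ) - 1))) :=
        measure_mono (fun z hz => mem_ball_zero_iff.mpr hz.2)
      _ = _ := by
        rw [Measure.addHaar_ball volume _ (Real.rpow_pos_of_pos (by norm_num) _).le, hdim]
  -- nonnegativity of b
  have hbnn : ∀ k : ℕ, 0 ≤ b k := fun k => Real.rpow_nonneg
    (mul_nonneg (mul_nonneg (Real.rpow_nonneg (by norm_num) _)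
      (Real.rpow_nonneg (by positivity) _)) (by positivity)) _
  -- the sum bound
  set D : ℝ := (2:ℝ) ^ (2*(n:ℝ)) * (Real.log 2) ^ (e₁ * ((n:ℝ)/m)) *
    (6*(n:ℝ)) ^ ((n:ℝ)/m) with hDdef
  have hqle : ∀ k : ℕ, b k * ((2:ℝ) ^ (-(k:ℝ) - 1)) ^ (2 * n) ≤ D * ((k:ℝ)+1) ^ p := by
    intro k
    set K : ℝ := (k:ℝ) with hKdef
    have hK0 : (0:ℝ) ≤ K := Nat.cast_nonneg k
    set L : ℝ := Real.log 2 with hLdef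
    set q : ℝ := (n:ℝ)/m with hqdef
    have hX0 : (0:ℝ) ≤ (2:ℝ) ^ (2*(m:ℝ)*(K+2)) := Real.rpow_nonneg (by norm_num) _
    have hY0 : (0:ℝ) ≤ ((K+1)*L) ^ e₁ := Real.rpow_nonneg (by positivity) _
    have hZ0 : (0:ℝ) ≤ 3*(n:ℝ)*(K+2) := by positivity
    have hbk : b k = ((2:ℝ) ^ (2*(m:ℝ)*(K+2))) ^ q * (((K+1)*L) ^ e₁) ^ q *
        (3*(n:ℝ)*(K+2)) ^ q := by
      simp only [hbdef]
      rw [Real.mul_rpow (mul_nonneg hX0 hY0) hZ0, Real.mul_rpow hX0 hY0]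
    have hXq : ((2:ℝ) ^ (2*(m:ℝ)*(K+2))) ^ q = (2:ℝ) ^ (2*(n:ℝ)*(K+2)) := by
      rw [← Real.rpow_mul (by norm_num)]
      congr 1
      rw [hqdef]; field_simp
    have hYq : (((K+1)*L) ^ e₁) ^ q = (K+1) ^ (e₁*q) * L ^ (e₁*q) := by
      rw [← Real.rpow_mul (by positivity), Real.mul_rpow (by positivity) hlog2.le]
    have hρ : ((2:ℝ) ^ (-K - 1)) ^ (2 * n) = (2:ℝ) ^ ((-K-1)*(2*(n:ℝ))) := by
      rw [← Real.rpow_natCast ((2:ℝ) ^ (-K - 1)) (2*n), ← Real.rpow_mul (by norm_num)]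
      congr 1
      push_cast; ring
    have h2col : (2:ℝ) ^ (2*(n:ℝ)*(K+2)) * (2:ℝ) ^ ((-K-1)*(2*(n:ℝ))) =
        (2:ℝ) ^ (2*(n:ℝ)) := by
      rw [← Real.rpow_add (by norm_num)]
      congr 1; ring
    have hZq : (3*(n:ℝ)*(K+2)) ^ q ≤ (6*(n:ℝ)) ^ q * (K+1) ^ q := by
      rw [← Real.mul_rpow (by positivity) (by positivity)]
      exact Real.rpow_le_rpow hZ0 (by nlinarith) hq.le
    have hKcol : (K+1) ^ (e₁*q) * (K+1) ^ q = (K+1) ^ p := by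
      rw [← Real.rpow_add (by positivity)]
      congr 1
      rw [hpdef, he₁def, hqdef]; field_simp; ring
    have hLnn : (0:ℝ) ≤ L ^ (e₁*q) := Real.rpow_nonneg hlog2.le _
    calc b k * ((2:ℝ) ^ (-K - 1)) ^ (2 * n)
        = ((2:ℝ) ^ (2*(n:ℝ)*(K+2)) * (2:ℝ) ^ ((-K-1)*(2*(n:ℝ)))) * L ^ (e₁*q) *
            ((K+1) ^ (e₁*q) * (3*(n:ℝ)*(K+2)) ^ q) := by
          rw [hbk, hXq, hYq, hρ]; ring
      _ = (2:ℝ) ^ (2*(n:ℝ)) * L ^ (e₁*q) * ((K+1) ^ (e₁*q) * (3*(n:ℝ)*(K+2)) ^ q) := by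
          rw [h2col]
      _ ≤ (2:ℝ) ^ (2*(n:ℝ)) * L ^ (e₁*q) * ((K+1) ^ (e₁*q) * ((6*(n:ℝ)) ^ q * (K+1) ^ q)) := by
          apply mul_le_mul_of_nonneg_left _ (mul_nonneg (Real.rpow_nonneg (by norm_num) _) hLnn)
          exact mul_le_mul_of_nonneg_left hZq (Real.rpow_nonneg (by positivity) _)
      _ = (2:ℝ) ^ (2*(n:ℝ)) * L ^ (e₁*q) * (6*(n:ℝ)) ^ q * ((K+1) ^ (e₁*q) * (K+1) ^ q) := by
          ring
      _ = D * (K+1) ^ p := by rw [hKcol, hDdef]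
  -- summability
  have hsum : Summable (fun k : ℕ => D * ((k:ℝ)+1) ^ p) := by
    have h1 : Summable (fun j : ℕ => (j:ℝ) ^ p) := Real.summable_nat_rpow.mpr hp
    have h2 := h1.comp_injective Nat.succ_injective
    exact (h2.congr (fun k => by push_cast [Function.comp]; norm_num)).mul_left D
  have hDnn : 0 ≤ D := mul_nonneg (mul_nonneg (Real.rpow_nonneg (by norm_num) _)
    (Real.rpow_nonneg hlog2.le _)) (Real.rpow_nonneg (by positivity) _)
  -- main estimate
  have h0 : volume ({(0 : EuclideanSpace ℝ (Fin (2 * n)))} : Set _) = 0 :=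
    measure_singleton 0
  have haeeq : (ball (0 : EuclideanSpace ℝ (Fin (2 * n))) (1/2) : Set _) =ᵐ[volume]
      ball (0 : EuclideanSpace ℝ (Fin (2 * n))) (1/2) \
        ({0} : Set (EuclideanSpace ℝ (Fin (2 * n)))) :=
    (diff_ae_eq_self.mpr (measure_mono_null Set.inter_subset_right h0)).symm
  calc ∫⁻ z in ball (0 : EuclideanSpace ℝ (Fin (2 * n))) (1/2), F z
      = ∫⁻ z in ball (0 : EuclideanSpace ℝ (Fin (2 * n))) (1/2) \
          ({0} : Set (EuclideanSpace ℝ (Fin (2 * n)))), F z := by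
        rw [Measure.restrict_congr_set haeeq]
        rfl
    _ ≤ ∫⁻ z in ⋃ k, S k, F z := lintegral_mono_set hcover
    _ ≤ ∑' k, ∫⁻ z in S k, F z := lintegral_iUnion_le _ _
    _ ≤ ∑' k, ENNReal.ofReal (b k) * volume (S k) := by
        refine ENNReal.tsum_le_tsum (fun k => ?_)
        calc ∫⁻ z in S k, F z ≤ ∫⁻ _ in S k, ENNReal.ofReal (b k) :=
              setLIntegral_mono measurable_const (hpoint k)
          _ = ENNReal.ofReal (b k) * volume (S k) := setLIntegral_const _ _
    _ ≤ ∑' k, ENNReal.ofReal (b k * ((2:ℝ) ^ (-(k:ℝ) - 1)) ^ (2 * n)) *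
          volume (ball (0 : EuclideanSpace ℝ (Fin (2 * n))) 1) := by
        refine ENNReal.tsum_le_tsum (fun k => ?_)
        rw [ENNReal.ofReal_mul (hbnn k), mul_assoc]
        exact mul_le_mul_right (hμS k) _
    _ = (∑' k, ENNReal.ofReal (b k * ((2:ℝ) ^ (-(k:ℝ) - 1)) ^ (2 * n))) *
          volume (ball (0 : EuclideanSpace ℝ (Fin (2 * n))) 1) := ENNReal.tsum_mul_right
    _ ≤ (∑' k : ℕ, ENNReal.ofReal (D * ((k:ℝ)+1) ^ p)) *
          volume (ball (0 : EuclideanSpace ℝ (Fin (2 * n))) 1) := by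
        refine mul_le_mul_left (ENNReal.tsum_le_tsum (fun k => ?_)) _
        exact ENNReal.ofReal_le_ofReal (hqle k)
    _ < ⊤ := by
        refine ENNReal.mul_lt_top ?_ measure_ball_lt_top
        rw [← ENNReal.ofReal_tsum_of_nonneg
          (fun k => mul_nonneg hDnn (Real.rpow_nonneg (by positivity) _)) hsum]
        exact ENNReal.ofReal_lt_top
end
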